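/- For every integer n ≥ 0 with W(n+1) ≥ 5, one has q_n + 1.6·e^{−2·W(n+1)} ≤ 1. -/
import Mathlib


/-- Principal branch of the Lambert W function on `[0, ∞)`: for `x ≥ 0`,
`lambertW x` is the unique `y ≥ 0` with `y * exp y = x`. -/
noncomputable def lambertW (x : ℝ) : ℝ := Function.invFun (fun y : ℝ => y * Real.exp y) x

/-- `q n = 1 - e^{-R} (1 - 3/(2R) - 10/R² - 9/R³ + 1/R⁴) / (12 (1 + 1/R)³)` with `R = W(n+1)`. -/
noncomputable def q (n : ℕ) : ℝ :=
  1 - Real.exp (-(lambertW (n + 1))) *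
      (1 - 3 / (2 * lambertW (n + 1)) - 10 / (lambertW (n + 1)) ^ 2
        - 9 / (lambertW (n + 1)) ^ 3 + 1 / (lambertW (n + 1)) ^ 4) /
    (12 * (1 + 1 / (lambertW (n + 1))) ^ 3)

theorem stmt_12 (n : ℕ) (h : 5 ≤ lambertW (n + 1)) :
    q n + 1.6 * Real.exp (-2 * lambertW (n + 1)) ≤ 1 := by
  set R := lambertW (n + 1) with hRdef
  have hR0 : (0:ℝ) < R := by linarith
  set E := Real.exp (-R) with hEdef
  have hE0 : 0 < E := Real.exp_pos _
  -- exp 5 ≥ 148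
  have hexp5 : (148:ℝ) ≤ Real.exp 5 := by
    have h1 : Real.exp 5 = (Real.exp 1) ^ (5:ℕ) := by
      rw [← Real.exp_nat_mul]; norm_num
    have h2 := Real.exp_one_gt_d9
    have h3 : (2.7182818283:ℝ) ^ (5:ℕ) ≤ (Real.exp 1) ^ (5:ℕ) :=
      pow_le_pow_left₀ (by norm_num) (le_of_lt h2) 5
    have h4 : (148:ℝ) ≤ (2.7182818283:ℝ) ^ (5:ℕ) := by norm_num
    rw [h1]; linarith
  have hE : E ≤ 1 / 148 := by
    have h1 : E ≤ Real.exp (-5) := by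
      apply Real.exp_le_exp.2; linarith
    have h2 : Real.exp (-5) = 1 / Real.exp 5 := by
      rw [Real.exp_neg]; ring
    have h3 : (1:ℝ) / Real.exp 5 ≤ 1 / 148 := by
      apply one_div_le_one_div_of_le (by norm_num) hexp5
    linarith
  -- bounds on the rational function pieces
  have h1 : 3 / (2 * R) ≤ 3 / 10 := by
    rw [div_le_div_iff₀ (by linarith) (by norm_num)]; linarith
  have hR2 : (25:ℝ) ≤ R ^ 2 := by nlinarith
  have hR3 : (125:ℝ) ≤ R ^ 3 := by nlinarith
  have hR4 : (0:ℝ) < R ^ 4 := by positivity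
  have h2 : 10 / R ^ 2 ≤ 10 / 25 := by
    rw [div_le_div_iff₀ (by positivity) (by norm_num)]; linarith
  have h3 : 9 / R ^ 3 ≤ 9 / 125 := by
    rw [div_le_div_iff₀ (by positivity) (by norm_num)]; linarith
  have h4 : (0:ℝ) ≤ 1 / R ^ 4 := by positivity
  set P := 1 - 3 / (2 * R) - 10 / R ^ 2 - 9 / R ^ 3 + 1 / R ^ 4 with hPdef
  have hP : (0.228:ℝ) ≤ P := by
    rw [hPdef]; linarith
  -- bound on denominator
  have hinv : 1 / R ≤ 1 / 5 := one_div_le_one_div_of_le (by norm_num) h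
  have hinv0 : 0 ≤ 1 / R := by positivity
  have hcube : (1 + 1 / R) ^ 3 ≤ (1.2:ℝ) ^ 3 := by
    apply pow_le_pow_left₀ (by linarith) (by norm_num at hinv ⊢; linarith)
  set D := 12 * (1 + 1 / R) ^ 3 with hDdef
  have hD0 : 0 < D := by positivity
  have hD : D ≤ 20.736 := by
    rw [hDdef]; nlinarith
  -- key inequality
  have hkey : 1.6 * E * D ≤ P := by
    have : 1.6 * E * D ≤ 1.6 * (1 / 148) * 20.736 := by
      have hED : E * D ≤ (1 / 148) * 20.736 :=
        mul_le_mul hE hD (le_of_lt hD0) (by norm_num)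
      nlinarith
    nlinarith
  have hexp2 : Real.exp (-2 * R) = E * E := by
    rw [hEdef, ← Real.exp_add]; ring_nf
  have hfinal : 1.6 * Real.exp (-2 * R) ≤ E * P / D := by
    rw [hexp2, le_div_iff₀ hD0]
    calc 1.6 * (E * E) * D = E * (1.6 * E * D) := by ring
      _ ≤ E * P := by
        apply mul_le_mul_of_nonneg_left hkey (le_of_lt hE0)
  have hq : q n = 1 - E * P / D := by
    rw [q, hPdef, hDdef, hEdef, hRdef]
  rw [hq]
  linarith
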